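/- Let δ ∈ K satisfy N(δ) ≠ 1. Then the Lunardon–Polverino binomial f(x) = x^σ + δ·x^(σ^(n−1)) is scattered. -/

import Mathlib

private lemma lp_card_pow {q n : ℕ} {K : Type*} [Field K] [Fintype K]
    (hK : Fintype.card K = q ^ n) (j : ℕ) (a : K) : a ^ (q ^ n) ^ j = a := by
  rw [← hK]; exact FiniteField.pow_card_pow j a

private lemma lp_norm_frob {q n : ℕ} (hq2 : 2 ≤ q) (hn : 0 < n) {K : Type*}
    [Field K] [Fintype K] (hK : Fintype.card K = q ^ n) (j : ℕ) (z : K) :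
    (z ^ q ^ j) ^ ((q ^ n - 1) / (q - 1)) = z ^ ((q ^ n - 1) / (q - 1)) := by
  set e := (q ^ n - 1) / (q - 1) with he_def
  have hdvd : q - 1 ∣ q ^ n - 1 := by simpa using Nat.sub_dvd_pow_sub_pow q 1 n
  have hq1 : 0 < q - 1 := by omega
  have he : e * (q - 1) = q ^ n - 1 := Nat.div_mul_cancel hdvd
  have hle : q - 1 ≤ q ^ n - 1 := Nat.sub_le_sub_right (Nat.le_self_pow hn.ne' q) 1
  have hepos : 0 < e := Nat.div_pos hle hq1
  by_cases hz : z = 0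
  · have hqj : q ^ j ≠ 0 := by positivity
    simp [hz, zero_pow, hqj, hepos.ne', show q ≠ 0 by omega]
  · have hz1 : z ^ (q ^ n - 1) = 1 := by
      rw [← hK]; exact FiniteField.pow_card_sub_one_eq_one z hz
    have hdvdj : q - 1 ∣ q ^ j - 1 := by simpa using Nat.sub_dvd_pow_sub_pow q 1 j
    obtain ⟨m, hm⟩ := hdvdj
    have h1le : 1 ≤ q ^ j := Nat.one_le_pow _ _ (by omega)
    have hqj : q ^ j = (q - 1) * m + 1 := by omega
    calc (z ^ q ^ j) ^ e = (z ^ e) ^ ((q - 1) * m + 1) := by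
          rw [← pow_mul, ← pow_mul, Nat.mul_comm, hqj]
      _ = ((z ^ (e * (q - 1))) ^ m) * z ^ e := by
          rw [pow_add, pow_one, ← pow_mul, ← pow_mul, Nat.mul_assoc]
      _ = z ^ e := by rw [he, hz1, one_pow, one_mul]

private lemma lp_fix {q n s : ℕ} (hn : 1 < n) (hsn : Nat.Coprime s n) {K : Type*}
    [Field K] [Fintype K] (hK : Fintype.card K = q ^ n) (u : K)
    (hu : u ^ q ^ s = u) : u ^ q = u := by
  have hus : ∀ j : ℕ, u ^ q ^ (s * j) = u := by
    intro j
    induction j with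
    | zero => simp
    | succ j ih =>
      have : s * (j + 1) = s * j + s := by ring
      rw [this, pow_add, pow_mul, ih, hu]
  obtain ⟨a, -, ha⟩ := Nat.exists_mul_mod_eq_one_of_coprime hsn hn
  have hmod := Nat.div_add_mod (s * a) n
  have hsa : s * a = n * (s * a / n) + 1 := by omega
  have hq' : q ^ (s * a) = q ^ (n * (s * a / n)) * q := by
    rw [← pow_succ]; exact congrArg (q ^ ·) hsa
  symm
  calc u = u ^ q ^ (s * a) := (hus a).symm
    _ = (u ^ q ^ (n * (s * a / n))) ^ q := by rw [hq', pow_mul]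
    _ = u ^ q := by rw [pow_mul q n, lp_card_pow hK]

/-- If `N(δ) ≠ 1`, the Lunardon–Polverino binomial `x ↦ x^σ + δ x^(σ^(n-1))`
is scattered. -/
theorem stmt_1 (q n s : ℕ) (hq : IsPrimePow q) (hn : 3 ≤ n) (hs : 0 < s)
    (hsn : Nat.Coprime s n) (K : Type*) [Field K] [Fintype K]
    (hK : Fintype.card K = q ^ n) (δ : K)
    (hδ : δ ^ ((q ^ n - 1) / (q - 1)) ≠ 1) :
    ∀ x t : K, x ≠ 0 → t ≠ 0 →
      x * (t ^ (q ^ s) + δ * t ^ ((q ^ s) ^ (n - 1))) =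
        t * (x ^ (q ^ s) + δ * x ^ ((q ^ s) ^ (n - 1))) →
      ∃ c : K, c ^ q = c ∧ x = c * t := by
  intro x t hx ht heq
  have hq2 : 2 ≤ q := hq.two_le
  obtain ⟨p, k, hpp, hkpos, hpk⟩ := hq
  have hppn : p.Prime := hpp.nat_prime
  haveI : Fact p.Prime := ⟨hppn⟩
  -- characteristic of K is p
  haveI : CharP K (ringChar K) := ringChar.charP K
  obtain ⟨m, hrp, hcardm⟩ := FiniteField.card K (ringChar K)
  have hpr : p = ringChar K := by
    have h1 : p ^ (k * n) = ringChar K ^ (m : ℕ) := by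
      rw [pow_mul, hpk, ← hK, hcardm]
    have h2 : p ∣ ringChar K ^ (m : ℕ) := by
      rw [← h1]
      exact dvd_pow_self p (by positivity)
    exact (Nat.prime_dvd_prime_iff_eq hppn hrp).mp (hppn.dvd_of_dvd_pow h2)
  haveI hcharp : CharP K p := hpr ▸ ringChar.charP K
  -- notation
  obtain ⟨u, rfl⟩ : ∃ u, x = u * t := ⟨x * t⁻¹, (inv_mul_cancel_right₀ ht x).symm⟩
  have hτ : (q ^ s) ^ (n - 1) = q ^ (s * (n - 1)) := (pow_mul q s (n - 1)).symm
  -- the σ^n = identity fact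
  have hσn : (u ^ q ^ s) ^ q ^ (s * (n - 1)) = u := by
    rw [← pow_mul, ← pow_add]
    have hsum : s + s * (n - 1) = n * s := by
      have h1 : 1 ≤ n := by omega
      calc s + s * (n - 1) = s * (1 + (n - 1)) := by ring
        _ = s * n := by rw [Nat.add_sub_cancel' h1]
        _ = n * s := Nat.mul_comm s n
    rw [hsum, pow_mul q n, lp_card_pow hK]
  -- Frobenius expansion
  have hfr : (u - u ^ q ^ s) ^ q ^ (s * (n - 1))
      = u ^ q ^ (s * (n - 1)) - u := by
    have h1 : q ^ (s * (n - 1)) = p ^ (k * (s * (n - 1))) := by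
      rw [pow_mul p k, hpk]
    rw [h1, sub_pow_char_pow, ← h1, hσn]
  -- main relation
  have heq2 : u * t ^ q ^ s + δ * u * t ^ q ^ (s * (n - 1))
      = u ^ q ^ s * t ^ q ^ s + δ * u ^ q ^ (s * (n - 1)) * t ^ q ^ (s * (n - 1)) := by
    apply mul_left_cancel₀ ht
    rw [mul_pow, mul_pow, hτ] at heq
    linear_combination heq
  have key : (u - u ^ q ^ s) * t ^ q ^ s
      = δ * (u - u ^ q ^ s) ^ q ^ (s * (n - 1)) * t ^ q ^ (s * (n - 1)) := by
    rw [hfr]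
    linear_combination heq2
  by_cases hw : u - u ^ q ^ s = 0
  · have hufix : u ^ q ^ s = u := by
      have := sub_eq_zero.mp hw; exact this.symm
    exact ⟨u, lp_fix (by omega) hsn hK u hufix, rfl⟩
  · exfalso
    set e := (q ^ n - 1) / (q - 1) with he_def
    have hnpos : 0 < n := by omega
    have l1 := lp_norm_frob hq2 hnpos hK s t
    have l2 := lp_norm_frob hq2 hnpos hK (s * (n - 1)) t
    have l3 := lp_norm_frob hq2 hnpos hK (s * (n - 1)) (u - u ^ q ^ s)
    rw [← he_def] at l1 l2 l3
    have hmain : (u - u ^ q ^ s) ^ e * t ^ e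
        = δ ^ e * ((u - u ^ q ^ s) ^ e * t ^ e) := by
      calc (u - u ^ q ^ s) ^ e * t ^ e
          = ((u - u ^ q ^ s) * t ^ q ^ s) ^ e := by rw [mul_pow, l1]
        _ = (δ * (u - u ^ q ^ s) ^ q ^ (s * (n - 1)) * t ^ q ^ (s * (n - 1))) ^ e := by
            rw [key]
        _ = δ ^ e * ((u - u ^ q ^ s) ^ e * t ^ e) := by
            rw [mul_pow, mul_pow, l3, l2, mul_assoc]
    have hne : (u - u ^ q ^ s) ^ e * t ^ e ≠ 0 :=
      mul_ne_zero (pow_ne_zero _ hw) (pow_ne_zero _ ht)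
    have h1 : (1 : K) * ((u - u ^ q ^ s) ^ e * t ^ e)
        = δ ^ e * ((u - u ^ q ^ s) ^ e * t ^ e) := by
      rw [one_mul]; exact hmain
    exact hδ (mul_right_cancel₀ hne h1).symm
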